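/- For every nonnegative integer d there exists a linear hypergraph that is (d,d)-rich and has exactly C(d+1,2) hyperedges; i.e., the bound C(d+1,2) in the richness lemma is tight. -/

import Mathlib

abbrev Var := ℕ
abbrev Lit := Var × Bool
abbrev Clause := Finset Lit
abbrev CNF := Finset Clause

/-- A clause is valid if it does not contain a variable together with its negation. -/
def Clause.valid (C : Clause) : Prop := ∀ x : Var, ¬(((x, true) ∈ C) ∧ ((x, false) ∈ C))

/-- The set of variables of a clause. -/
def vbl (C : Clause) : Finset Var := C.image Prod.fst

/-- A `k`-CNF formula: every clause is valid and has exactly `k` literals. -/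
def IsKCNF (k : ℕ) (F : CNF) : Prop := ∀ C ∈ F, Clause.valid C ∧ C.card = k

/-- A CNF formula is linear if any two distinct clauses share at most one variable. -/
def LinearCNF (F : CNF) : Prop := ∀ C ∈ F, ∀ D ∈ F, C ≠ D → (vbl C ∩ vbl D).card ≤ 1

/-- A CNF formula is weakly linear if any two distinct clauses share at most one literal. -/
def WeaklyLinear (F : CNF) : Prop := ∀ C ∈ F, ∀ D ∈ F, C ≠ D → (C ∩ D).card ≤ 1

/-- An assignment satisfies a formula if every clause contains a true literal. -/
def Satisfies (α : Var → Bool) (F : CNF) : Prop := ∀ C ∈ F, ∃ l ∈ C, α l.1 = l.2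

def Unsat (F : CNF) : Prop := ¬ ∃ α, Satisfies α F
/-- A hypergraph (given by its edge set) is linear if any two distinct hyperedges
intersect in at most one vertex. -/
def HypLinear (E : Finset (Finset ℕ)) : Prop := ∀ e ∈ E, ∀ f ∈ E, e ≠ f → (e ∩ f).card ≤ 1

/-- A hypergraph is `k`-uniform if every hyperedge has exactly `k` vertices. -/
def KUniform (k : ℕ) (E : Finset (Finset ℕ)) : Prop := ∀ e ∈ E, e.card = k

def hypDegree (E : Finset (Finset ℕ)) (v : ℕ) : ℕ := (E.filter (fun e => v ∈ e)).card

/-- For every `d` there is a linear hypergraph that is `(d,d)`-rich (at least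
`d` vertices of degree at least `d`) with exactly `C(d+1,2)` hyperedges. -/
theorem stmt6 (d : ℕ) :
    ∃ E : Finset (Finset ℕ), HypLinear E ∧
      (∃ S : Finset ℕ, d ≤ S.card ∧ ∀ v ∈ S, d ≤ hypDegree E v) ∧
      E.card = (d + 1).choose 2 := by

  refine ⟨(Finset.range (d+1)).powersetCard 2, ?_, ?_, ?_⟩
  · intro e he f hf hne
    by_contra h
    push_neg at h
    have he2 : e.card = 2 := (Finset.mem_powersetCard.mp he).2
    have hf2 : f.card = 2 := (Finset.mem_powersetCard.mp hf).2
    have h1 : e ∩ f ⊆ e := Finset.inter_subset_left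
    have h2 : e ∩ f ⊆ f := Finset.inter_subset_right
    have hc : (e ∩ f).card ≤ 2 := he2 ▸ Finset.card_le_card h1
    have hef : e ∩ f = e := Finset.eq_of_subset_of_card_le h1 (by omega)
    have hef2 : e ∩ f = f := Finset.eq_of_subset_of_card_le h2 (by omega)
    exact hne (hef ▸ hef2)
  · refine ⟨Finset.range d, by simp, ?_⟩
    intro v hv
    have hvlt : v < d := Finset.mem_range.mp hv
    unfold hypDegree
    have := Finset.card_le_card_of_injOn
      (f := fun i => insert v {i}) (s := (Finset.range (d+1)).erase v)
      (t := ((Finset.range (d+1)).powersetCard 2).filter (fun e => v ∈ e))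
      ?_ ?_
    · have hce : ((Finset.range (d+1)).erase v).card = d := by
        rw [Finset.card_erase_of_mem (Finset.mem_range.mpr (by omega))]
        simp
      omega
    · intro i hi
      obtain ⟨hiv, hir⟩ := Finset.mem_erase.mp hi
      refine Finset.mem_filter.mpr ⟨Finset.mem_powersetCard.mpr ⟨?_, ?_⟩, by simp⟩
      · intro x hx
        simp only [Finset.mem_insert, Finset.mem_singleton] at hx
        rcases hx with rfl | rfl
        · exact Finset.mem_range.mpr (by omega)
        · exact hir
      · rw [Finset.card_insert_of_notMem (by simp [Ne.symm hiv])]; simp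
    · intro a ha b hb hab
      obtain ⟨hav, _⟩ := Finset.mem_erase.mp ha
      simp only at hab
      have : a ∈ insert v ({b} : Finset ℕ) := by
        rw [← hab]; simp
      simp only [Finset.mem_insert, Finset.mem_singleton] at this
      tauto
  · rw [Finset.card_powersetCard]
    simp
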